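/- In the setting of the single sub-demixing matrix update, the value of the surrogate cost tr(W̄ᴴ V_ℓ W̄ B_ℓ⁻¹) − 2 log|det W| at W̄_ℓ = X Q⁻¹ R B_ℓ^{1/2} does not depend on the choice of the unitary matrix R, nor on the choice of the full-column-rank matrix X satisfying the null-space condition Xᴴ V_ℓ [W̄_1 ⋯ W̄_{ℓ−1} W̄_{ℓ+1} ⋯ W̄_L] = 0. -/

import Mathlib

open Matrix ComplexOrder

section JisaAux

/-- Auxiliary: the value of the quadratic form at the updated block is `B`. -/
lemma jisa_aux_trace {d n : Type*} [Fintype d] [Fintype n] [DecidableEq d]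
    (V : Matrix n n ℂ) (B Bh : Matrix d d ℂ) (hBh : Bhᴴ * Bh = B)
    (X : Matrix n d ℂ) (Q : Matrix d d ℂ) (hQ : IsUnit Q)
    (hQfac : Xᴴ * V * X = Qᴴ * Q) (R : Matrix d d ℂ) (hR : Rᴴ * R = 1) :
    (X * Q⁻¹ * R * Bh)ᴴ * V * (X * Q⁻¹ * R * Bh) = B := by
  have hd : IsUnit Q.det := (Matrix.isUnit_iff_isUnit_det _).mp hQ
  have hdH : IsUnit Qᴴ.det := by rw [Matrix.det_conjTranspose]; exact hd.star
  have h1 : (X * Q⁻¹ * R * Bh)ᴴ * V * (X * Q⁻¹ * R * Bh)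
      = Bhᴴ * Rᴴ * (Qᴴ⁻¹ * (Xᴴ * V * X) * Q⁻¹) * R * Bh := by
    simp only [conjTranspose_mul, Matrix.conjTranspose_nonsing_inv, Matrix.mul_assoc]
  have h2 : Qᴴ⁻¹ * (Qᴴ * Q) * Q⁻¹ = 1 := by
    rw [← Matrix.mul_assoc, Matrix.nonsing_inv_mul _ hdH, Matrix.one_mul,
      Matrix.mul_nonsing_inv _ hd]
  rw [h1, hQfac, h2, Matrix.mul_one, Matrix.mul_assoc Bhᴴ, hR, Matrix.mul_one, hBh]

/-- Auxiliary: block structure of `Fᴴ V F` for `F = [X Wt]`. -/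
lemma jisa_aux_block {d e : ℕ}
    (V : Matrix (Fin d ⊕ Fin e) (Fin d ⊕ Fin e) ℂ) (hV : V.PosDef)
    (Wt : Matrix (Fin d ⊕ Fin e) (Fin e) ℂ)
    (X : Matrix (Fin d ⊕ Fin e) (Fin d) ℂ)
    (hXnull : Xᴴ * V * Wt = 0)
    (Q : Matrix (Fin d) (Fin d) ℂ)
    (hQfac : Xᴴ * V * X = Qᴴ * Q) :
    (fromCols X Wt)ᴴ * V * fromCols X Wt
      = fromBlocks (Qᴴ * Q) 0 0 (Wtᴴ * V * Wt) := by
  have hWX : Wtᴴ * V * X = 0 := by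
    have h : Wtᴴ * V * X = (Xᴴ * V * Wt)ᴴ := by
      simp only [conjTranspose_mul, conjTranspose_conjTranspose, hV.1.eq, Matrix.mul_assoc]
    rw [h, hXnull, conjTranspose_zero]
  rw [conjTranspose_fromCols_eq_fromRows_conjTranspose, fromRows_mul,
    fromRows_mul_fromCols, hXnull, hWX, hQfac]

/-- Auxiliary: determinant factorisation for `[X*C  Wt]`. -/
lemma jisa_aux_det {d e : ℕ}
    (Wt : Matrix (Fin d ⊕ Fin e) (Fin e) ℂ)
    (X : Matrix (Fin d ⊕ Fin e) (Fin d) ℂ) (C : Matrix (Fin d) (Fin d) ℂ) :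
    (fromCols (X * C) Wt).det = (fromCols X Wt).det * C.det := by
  have h : fromCols (X * C) Wt = fromCols X Wt * fromBlocks C 0 0 1 := by
    rw [fromCols_mul_fromBlocks]
    simp
  rw [h, Matrix.det_mul, Matrix.det_fromBlocks_zero₂₁, Matrix.det_one, mul_one]

end JisaAux

/-- Invariance of the surrogate cost in the single sub-demixing matrix update
(Theorem 1, invariance part).  The rows of `W` other than block `ℓ` are the
conjugated columns of the fixed matrix `Wt`; the updated block is
`W̄ = X Q⁻¹ R Bh`.  The value of the cost
`tr(W̄ᴴ V W̄ B⁻¹).re − 2 log|det W|` is independent of the unitary matrix `R`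
and of the full-column-rank matrix `X` satisfying the null-space condition
`Xᴴ V Wt = 0`. -/
theorem jisa_single_block_cost_invariance {d e : ℕ}
    (V : Matrix (Fin d ⊕ Fin e) (Fin d ⊕ Fin e) ℂ) (hV : V.PosDef)
    (Wt : Matrix (Fin d ⊕ Fin e) (Fin e) ℂ)
    (B Bh : Matrix (Fin d) (Fin d) ℂ) (hB : B.PosDef) (hBh : Bhᴴ * Bh = B)
    (X₁ X₂ : Matrix (Fin d ⊕ Fin e) (Fin d) ℂ)
    (hX₁rank : X₁.rank = d) (hX₂rank : X₂.rank = d)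
    (hX₁null : X₁ᴴ * V * Wt = 0) (hX₂null : X₂ᴴ * V * Wt = 0)
    (Q₁ Q₂ : Matrix (Fin d) (Fin d) ℂ) (hQ₁ : IsUnit Q₁) (hQ₂ : IsUnit Q₂)
    (hQ₁fac : X₁ᴴ * V * X₁ = Q₁ᴴ * Q₁) (hQ₂fac : X₂ᴴ * V * X₂ = Q₂ᴴ * Q₂)
    (R₁ R₂ : Matrix (Fin d) (Fin d) ℂ)
    (hR₁ : R₁ᴴ * R₁ = 1) (hR₂ : R₂ᴴ * R₂ = 1) :
    (fun (Wbar : Matrix (Fin d ⊕ Fin e) (Fin d) ℂ) =>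
        ((Wbarᴴ * V * Wbar * B⁻¹).trace.re
          - 2 * Real.log (‖(Matrix.fromCols Wbar Wt)ᴴ.det‖)))
      (X₁ * Q₁⁻¹ * R₁ * Bh)
    = (fun (Wbar : Matrix (Fin d ⊕ Fin e) (Fin d) ℂ) =>
        ((Wbarᴴ * V * Wbar * B⁻¹).trace.re
          - 2 * Real.log (‖(Matrix.fromCols Wbar Wt)ᴴ.det‖)))
      (X₂ * Q₂⁻¹ * R₂ * Bh) := by
  simp only
  -- determinants as scalars
  set f₁ : ℂ := (fromCols X₁ Wt).det with hf₁
  set f₂ : ℂ := (fromCols X₂ Wt).det with hf₂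
  have hq₁d : IsUnit Q₁.det := (Matrix.isUnit_iff_isUnit_det _).mp hQ₁
  have hq₂d : IsUnit Q₂.det := (Matrix.isUnit_iff_isUnit_det _).mp hQ₂
  -- the key scalar identities |fᵢ|² · det V = |det Qᵢ|² · det(WtᴴVWt)
  have hkey : ∀ (X : Matrix (Fin d ⊕ Fin e) (Fin d) ℂ) (Q : Matrix (Fin d) (Fin d) ℂ),
      Xᴴ * V * Wt = 0 → Xᴴ * V * X = Qᴴ * Q →
      (‖(fromCols X Wt).det‖) ^ 2 * ‖V.det‖
        = (‖Q.det‖) ^ 2 * ‖(Wtᴴ * V * Wt).det‖ := by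
    intro X Q hnull hfac
    have hb := jisa_aux_block V hV Wt X hnull Q hfac
    have hdet := congrArg Matrix.det hb
    simp only [Matrix.det_mul, Matrix.det_conjTranspose,
      Matrix.det_fromBlocks_zero₂₁] at hdet
    have habs := congrArg (‖·‖) hdet
    simp only [norm_mul, Complex.star_def, Complex.norm_conj] at habs
    linear_combination habs
  have e₁ := hkey X₁ Q₁ hX₁null hQ₁fac
  have e₂ := hkey X₂ Q₂ hX₂null hQ₂fac
  have hvpos : 0 < ‖V.det‖ := norm_pos_iff.mpr hV.det_pos.ne'
  -- |f₁| * |det Q₂| = |f₂| * |det Q₁|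
  have hcross : ‖f₁‖ * ‖Q₂.det‖
      = ‖f₂‖ * ‖Q₁.det‖ := by
    have hsq : (‖f₁‖ * ‖Q₂.det‖) ^ 2
        = (‖f₂‖ * ‖Q₁.det‖) ^ 2 := by
      have h := mul_right_cancel₀ hvpos.ne'
        (show (‖f₁‖ * ‖Q₂.det‖) ^ 2 * ‖V.det‖
            = (‖f₂‖ * ‖Q₁.det‖) ^ 2 * ‖V.det‖ by
          linear_combination (‖Q₂.det‖) ^ 2 * e₁ - (‖Q₁.det‖) ^ 2 * e₂)
      exact h
    have h1 : (0:ℝ) ≤ ‖f₁‖ * ‖Q₂.det‖ := by positivity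
    have h2 : (0:ℝ) ≤ ‖f₂‖ * ‖Q₁.det‖ := by positivity
    have := sq_eq_sq_iff_abs_eq_abs _ _ |>.mp hsq
    rwa [abs_of_nonneg h1, abs_of_nonneg h2] at this
  -- trace terms agree
  have ht₁ := jisa_aux_trace V B Bh hBh X₁ Q₁ hQ₁ hQ₁fac R₁ hR₁
  have ht₂ := jisa_aux_trace V B Bh hBh X₂ Q₂ hQ₂ hQ₂fac R₂ hR₂
  -- determinant of full matrices
  have habsR : ∀ R : Matrix (Fin d) (Fin d) ℂ, Rᴴ * R = 1 → ‖R.det‖ = 1 := by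
    intro R hR
    have := congrArg Matrix.det hR
    rw [Matrix.det_mul, Matrix.det_conjTranspose, Matrix.det_one] at this
    have h := congrArg (‖·‖) this
    simp only [norm_mul, Complex.star_def, Complex.norm_conj, norm_one] at h
    nlinarith [norm_nonneg R.det]
  have hfull : ∀ (X : Matrix (Fin d ⊕ Fin e) (Fin d) ℂ) (Q R : Matrix (Fin d) (Fin d) ℂ),
      IsUnit Q.det → Rᴴ * R = 1 →
      ‖(fromCols (X * Q⁻¹ * R * Bh) Wt).det‖
        = ‖(fromCols X Wt).det‖ * (‖Q.det‖)⁻¹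
            * ‖Bh.det‖ := by
    intro X Q R hQd hRu
    have h : X * Q⁻¹ * R * Bh = X * (Q⁻¹ * R * Bh) := by
      simp only [Matrix.mul_assoc]
    rw [h, jisa_aux_det, Matrix.det_mul, Matrix.det_mul, Matrix.det_nonsing_inv,
      Ring.inverse_eq_inv]
    simp only [norm_mul, norm_inv, habsR R hRu]
    ring
  have hd₁ := hfull X₁ Q₁ R₁ hq₁d hR₁
  have hd₂ := hfull X₂ Q₂ R₂ hq₂d hR₂
  have hq₁ne : ‖Q₁.det‖ ≠ 0 := norm_ne_zero_iff.mpr hq₁d.ne_zero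
  have hq₂ne : ‖Q₂.det‖ ≠ 0 := norm_ne_zero_iff.mpr hq₂d.ne_zero
  have habs : ‖(fromCols (X₁ * Q₁⁻¹ * R₁ * Bh) Wt)ᴴ.det‖
      = ‖(fromCols (X₂ * Q₂⁻¹ * R₂ * Bh) Wt)ᴴ.det‖ := by
    rw [Matrix.det_conjTranspose, Matrix.det_conjTranspose]
    simp only [Complex.star_def, Complex.norm_conj]
    rw [hd₁, hd₂]
    field_simp
    linear_combination ‖Bh.det‖ * hcross
  rw [ht₁, ht₂, habs]
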